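/- arXiv:2110.09029 — 3 statements merged into one kernel-verified Lean document; each statement's English description precedes it below -/
import Mathlib

section
/- Let G be a finite group with a fixed-point-free automorphism α, and let N be a normal subgroup of G with α(N) = N. Then the induced automorphism on the quotient G/N is also fixed-point-free. -/
/-- If `α` is a fixed-point-free automorphism of a finite group `G` and `N` is a
normal `α`-invariant subgroup, then the induced automorphism on `G ⧸ N` is fixed-point-free,
i.e. `g⁻¹ * α g ∈ N → g ∈ N`. -/
theorem stmt_1 {G : Type*} [Group G] [Finite G] (α : G ≃* G)
    (hfpf : ∀ g : G, α g = g → g = 1)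
    (N : Subgroup G) [N.Normal] (hN : N.map α.toMonoidHom = N) :
    ∀ g : G, g⁻¹ * α g ∈ N → g ∈ N := by
  have hinj : Function.Injective (fun x : G => x⁻¹ * α x) := by
    intro x y h
    simp only at h
    have key : α (y * x⁻¹) = y * x⁻¹ := by
      have h1 : y * x⁻¹ * α x = α y := by
        rw [mul_assoc, h, ← mul_assoc, mul_inv_cancel, one_mul]
      rw [map_mul, map_inv]
      rw [← h1]
      group
    have := hfpf _ key
    exact (mul_inv_eq_one.mp this).symm
  have hmem : ∀ n : G, n ∈ N → α n ∈ N := by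
    intro n hn
    rw [← hN]
    exact ⟨n, hn, rfl⟩
  let F : N → N := fun n => ⟨(n : G)⁻¹ * α n, N.mul_mem (N.inv_mem n.2) (hmem n n.2)⟩
  have hFinj : Function.Injective F := by
    intro a b hab
    have : (a : G)⁻¹ * α a = (b : G)⁻¹ * α b := congrArg Subtype.val hab
    exact Subtype.ext (hinj this)
  have hFsurj : Function.Surjective F := Finite.surjective_of_injective hFinj
  intro g hg
  obtain ⟨n, hn⟩ := hFsurj ⟨g⁻¹ * α g, hg⟩
  have : (n : G)⁻¹ * α n = g⁻¹ * α g := congrArg Subtype.val hn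
  have := hinj this
  rw [← this]
  exact n.2
end

section
/- Let G be a finite group with a fixed-point-free automorphism α of order dividing n. Then α is n-split, i.e. for every g ∈ G, the product g · α(g) · α²(g) ⋯ αⁿ⁻¹(g) equals 1. -/
lemma telescope {G : Type*} [Group G] (α : MulAut G) (n : ℕ) (g : G) :
    ((List.range n).map (fun i => (α ^ i) (g⁻¹ * α g))).prod = g⁻¹ * (α ^ n) g := by
  induction n with
  | zero => simp
  | succ n ih =>
      rw [List.range_succ, List.map_append, List.prod_append]
      simp only [List.map_cons, List.map_nil, List.prod_cons, List.prod_nil, ih]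
      have h1 : (α ^ n) (g⁻¹ * α g) = ((α ^ n) g)⁻¹ * (α ^ (n+1)) g := by
        rw [map_mul, map_inv, pow_succ]; rfl
      rw [h1]; group

/-- If `α` is a fixed-point-free automorphism of a finite group `G` with `αⁿ = 1`,
then `α` is `n`-split: `g * α(g) * α²(g) ⋯ αⁿ⁻¹(g) = 1` for all `g`. -/
theorem stmt_4 {G : Type*} [Group G] [Finite G] (α : MulAut G) (n : ℕ)
    (hfpf : ∀ g : G, α g = g → g = 1) (hord : α ^ n = 1) :
    ∀ g : G, ((List.range n).map (fun i => (α ^ i) g)).prod = 1 := by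
  have hinj : Function.Injective (fun g : G => g⁻¹ * α g) := by
    intro a b hab
    simp only at hab
    have : α (b * a⁻¹) = b * a⁻¹ := by
      rw [map_mul, map_inv, mul_inv_eq_iff_eq_mul, mul_assoc, hab]
      simp
    have h1 : b * a⁻¹ = 1 := hfpf _ this
    have := mul_inv_eq_one.mp h1
    exact this.symm
  have hsurj := Finite.injective_iff_surjective.mp hinj
  intro g
  obtain ⟨h, hh⟩ := hsurj g
  simp only at hh
  rw [← hh, telescope α n h, hord]
  simp
end

section
/- Let G be a finite solvable group of derived length k with automorphism α, and suppose the integer polynomial f is an abelian identity of α, meaning f(ᾱ) vanishes on every abelian characteristic section of G. Then f(α)^k vanishes identically on G, where f(α) : G → G is the ordered evaluation map. -/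
/-- The ordered evaluation `f(α) : G → G`, `g ↦ ∏ᵢ αⁱ(g)^(aᵢ)` of a polynomial
`f = ∑ aᵢ xⁱ ∈ ℤ[x]` at an automorphism `α`. -/
def orderedEval {G : Type*} [Group G] (f : Polynomial ℤ) (α : MulAut G) (g : G) : G :=
  ((List.range (f.natDegree + 1)).map (fun i => ((α ^ i) g) ^ (f.coeff i))).prod

open scoped commutatorElement

theorem derivedSeries_characteristic' {G : Type*} [Group G] (n : ℕ) :
    (derivedSeries G n).Characteristic := by
  induction n with
  | zero => exact Subgroup.topCharacteristic
  | succ n ih => exact @Subgroup.commutator_characteristic G _ _ _ ih ih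

/-- If `G` is a finite solvable group of derived length `k` with automorphism `α`
and `f ∈ ℤ[x]` is an abelian identity of `α` (i.e. the ordered evaluation `f(α)` vanishes on
every abelian characteristic section `H/K` of `G`), then `f(α)^[k]` vanishes identically on
`G`. -/
theorem stmt_8 {G : Type*} [Group G] [Finite G] (k : ℕ) (α : MulAut G)
    (hsolv : derivedSeries G k = ⊥) (f : Polynomial ℤ)
    (habid : ∀ H K : Subgroup G, H.Characteristic → K.Characteristic → K ≤ H →
      (∀ h₁ ∈ H, ∀ h₂ ∈ H, ⁅h₁, h₂⁆ ∈ K) → ∀ h ∈ H, orderedEval f α h ∈ K) :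
    ∀ g : G, (orderedEval f α)^[k] g = 1 := by
  have key : ∀ i (g : G), (orderedEval f α)^[i] g ∈ derivedSeries G i := by
    intro i
    induction i with
    | zero => intro g; simp [derivedSeries_zero]
    | succ n ih =>
      intro g
      haveI := derivedSeries_normal G n
      rw [Function.iterate_succ_apply']
      exact habid (derivedSeries G n) (derivedSeries G (n + 1))
        (derivedSeries_characteristic' n) (derivedSeries_characteristic' (n + 1))
        (derivedSeries_succ G n ▸ Subgroup.commutator_le_left _ _)
        (fun h₁ h₁m h₂ h₂m => derivedSeries_succ G n ▸
          Subgroup.commutator_mem_commutator h₁m h₂m)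
        _ (ih g)
  intro g
  have := key k g
  rw [hsolv] at this
  simpa using this
end
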